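/- For every integer q ≥ 2, the function g(x) = (1 − H_q(x/2))/(1 − x) on (0,1) satisfies: (i) the sign of g′(x) equals the sign of x − 2/q for every x ∈ (0,1); and (ii) g″(x) ≥ 0 for every x ∈ (0,1), so g is convex on (0,1). -/

import Mathlib

open Filter Real Set

/-- The q-ary entropy function. -/
noncomputable def qEntropy (q : ℕ) (x : ℝ) : ℝ :=
  x * Real.logb q (((q : ℝ) - 1) / x) + (1 - x) * Real.logb q (1 / (1 - x))

/-- The function `g(x) = (1 - H_q(x/2))/(1-x)`. -/
noncomputable def gHS (q : ℕ) (x : ℝ) : ℝ :=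
  (1 - qEntropy q (x / 2)) / (1 - x)

/-- `F(x) = 1 - H_q(x/2)` written with plain logarithms. -/
noncomputable def Ff (q : ℕ) (x : ℝ) : ℝ :=
  1 - ((x/2) * (Real.log ((q:ℝ)-1) - (Real.log x - Real.log 2))
      - (1 - x/2) * (Real.log (2-x) - Real.log 2)) / Real.log q

/-- `A = F'`. -/
noncomputable def Af (q : ℕ) (x : ℝ) : ℝ :=
  (Real.log x - Real.log ((q:ℝ)-1) - Real.log (2-x)) / (2 * Real.log q)

/-- `B = F''`. -/
noncomputable def Bf (q : ℕ) (x : ℝ) : ℝ :=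
  (1/x + 1/(2-x)) / (2 * Real.log q)

noncomputable def Nf (q : ℕ) (x : ℝ) : ℝ := Af q x * (1-x) + Ff q x

noncomputable def Mf (q : ℕ) (x : ℝ) : ℝ :=
  Bf q x * (1-x)^2 + 2 * (Af q x * (1-x)) + 2 * Ff q x

noncomputable def G1 (q : ℕ) (x : ℝ) : ℝ := Nf q x / (1-x)^2

noncomputable def G2 (q : ℕ) (x : ℝ) : ℝ := Mf q x / (1-x)^3

lemma gHS_eq (q : ℕ) (hq : 2 ≤ q) {x : ℝ} (hx : x ∈ Set.Ioo (0:ℝ) 1) :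
    gHS q x = Ff q x / (1-x) := by
  obtain ⟨hx0, hx1⟩ := hx
  have hq2 : (2:ℝ) ≤ (q:ℝ) := by exact_mod_cast hq
  have h1 : ((q:ℝ)-1) ≠ 0 := by linarith
  have h2 : x ≠ 0 := ne_of_gt hx0
  have h3 : (2:ℝ) - x ≠ 0 := by linarith
  have e1 : Real.log (((q:ℝ)-1)/(x/2))
      = Real.log ((q:ℝ)-1) - (Real.log x - Real.log 2) := by
    rw [Real.log_div h1 (by positivity), Real.log_div h2 two_ne_zero]
  have e2 : Real.log (1/(1 - x/2)) = -(Real.log (2-x) - Real.log 2) := by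
    rw [show (1:ℝ) - x/2 = (2-x)/2 by ring, one_div, Real.log_inv,
      Real.log_div h3 two_ne_zero]
  unfold gHS qEntropy Ff
  rw [Real.logb, Real.logb, e1, e2]
  ring

lemma hasDerivAt_Ff (q : ℕ) (hq : 2 ≤ q) {x : ℝ} (hx0 : x ≠ 0) (hx2 : x ≠ 2) :
    HasDerivAt (Ff q) (Af q x) x := by
  have hq2 : (2:ℝ) ≤ (q:ℝ) := by exact_mod_cast hq
  have hL : Real.log q ≠ 0 := ne_of_gt (Real.log_pos (by exact_mod_cast hq.trans_lt' one_lt_two))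
  have h3 : (2:ℝ) - x ≠ 0 := fun h => hx2 (by linarith)
  have l1 : HasDerivAt (fun y : ℝ => Real.log y) x⁻¹ x := Real.hasDerivAt_log hx0
  have l2 : HasDerivAt (fun y : ℝ => Real.log (2-y)) (-(2-x)⁻¹) x := by
    have := (Real.hasDerivAt_log h3).comp x ((hasDerivAt_id x).const_sub 2)
    exact this.congr_deriv (by ring)
  have h1 : HasDerivAt (fun y : ℝ => y/2) (1/2) x := by
    simpa using (hasDerivAt_id x).div_const 2
  have h2 : HasDerivAt (fun y : ℝ => Real.log ((q:ℝ)-1) - (Real.log y - Real.log 2))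
      (-(x⁻¹)) x := by
    simpa using (l1.sub_const (Real.log 2)).const_sub (Real.log ((q:ℝ)-1))
  have h4 : HasDerivAt (fun y : ℝ => 1 - y/2) (-(1/2)) x := h1.const_sub 1
  have h5 : HasDerivAt (fun y : ℝ => Real.log (2-y) - Real.log 2) (-(2-x)⁻¹) x :=
    l2.sub_const _
  have h7 := (h1.mul h2).sub (h4.mul h5)
  have h8 := (h7.div_const (Real.log q)).const_sub 1
  refine h8.congr_deriv ?_
  unfold Af
  field_simp
  ring

lemma hasDerivAt_Af (q : ℕ) {x : ℝ} (hx0 : x ≠ 0) (hx2 : x ≠ 2) :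
    HasDerivAt (Af q) (Bf q x) x := by
  have h3 : (2:ℝ) - x ≠ 0 := fun h => hx2 (by linarith)
  have l1 : HasDerivAt (fun y : ℝ => Real.log y) x⁻¹ x := Real.hasDerivAt_log hx0
  have l2 : HasDerivAt (fun y : ℝ => Real.log (2-y)) (-(2-x)⁻¹) x := by
    have := (Real.hasDerivAt_log h3).comp x ((hasDerivAt_id x).const_sub 2)
    exact this.congr_deriv (by ring)
  have := ((l1.sub_const (Real.log ((q:ℝ)-1))).sub l2).div_const (2 * Real.log q)
  refine this.congr_deriv ?_
  unfold Bf
  rw [one_div, one_div]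
  ring

lemma one_sub_hasDerivAt (x : ℝ) : HasDerivAt (fun y : ℝ => 1 - y) (-1) x := by
  simpa using (hasDerivAt_id x).const_sub 1

lemma hasDerivAt_Nf (q : ℕ) (hq : 2 ≤ q) {x : ℝ} (hx0 : x ≠ 0) (hx2 : x ≠ 2) :
    HasDerivAt (Nf q) (Bf q x * (1-x)) x := by
  have h := ((hasDerivAt_Af q hx0 hx2).mul (one_sub_hasDerivAt x)).add
    (hasDerivAt_Ff q hq hx0 hx2)
  refine h.congr_deriv ?_
  ring

lemma hasDerivAt_Bf (q : ℕ) {x : ℝ} (hx0 : x ≠ 0) (hx2 : x ≠ 2) :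
    HasDerivAt (Bf q) ((1/(2-x)^2 - 1/x^2) / (2 * Real.log q)) x := by
  have h3 : (2:ℝ) - x ≠ 0 := fun h => hx2 (by linarith)
  have l1 : HasDerivAt (fun y : ℝ => 1/y) (-(x^2)⁻¹) x := by
    simpa [one_div] using hasDerivAt_inv hx0
  have l2 : HasDerivAt (fun y : ℝ => 1/(2-y)) (((2-x)^2)⁻¹) x := by
    have h := (hasDerivAt_inv h3).comp x ((hasDerivAt_id x).const_sub 2)
    have h' : HasDerivAt (fun y : ℝ => (2-y)⁻¹) (((2-x)^2)⁻¹) x := by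
      exact h.congr_deriv (by ring)
    simpa [one_div] using h'
  have := (l1.add l2).div_const (2 * Real.log q)
  refine this.congr_deriv ?_
  rw [one_div, one_div]
  ring

lemma hasDerivAt_Mf (q : ℕ) (hq : 2 ≤ q) {x : ℝ} (hx0 : x ≠ 0) (hx2 : x ≠ 2) :
    HasDerivAt (Mf q) ((1/(2-x)^2 - 1/x^2) / (2 * Real.log q) * (1-x)^2) x := by
  have hpow : HasDerivAt (fun y : ℝ => (1-y)^2) (2*(1-x)^1*(-1)) x := by
    exact ((one_sub_hasDerivAt x).pow 2).congr_deriv (by norm_num)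
  have hA := hasDerivAt_Af q hx0 hx2
  have hF := hasDerivAt_Ff q hq hx0 hx2
  have hB := hasDerivAt_Bf q hx0 hx2
  have h := ((hB.mul hpow).add
      ((hA.mul (one_sub_hasDerivAt x)).const_mul 2)).add (hF.const_mul 2)
  refine h.congr_deriv ?_
  ring

lemma hasDerivAt_G1 (q : ℕ) (hq : 2 ≤ q) {x : ℝ} (hx : x ∈ Set.Ioo (0:ℝ) 1) :
    HasDerivAt (G1 q) (G2 q x) x := by
  obtain ⟨hx0, hx1⟩ := hx
  have h1 : (1:ℝ) - x ≠ 0 := by intro h; linarith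
  have hx0' : x ≠ 0 := ne_of_gt hx0
  have hx2 : x ≠ 2 := by intro h; linarith
  have hpow : HasDerivAt (fun y : ℝ => (1-y)^2) (2*(1-x)^1*(-1)) x := by
    exact ((one_sub_hasDerivAt x).pow 2).congr_deriv (by norm_num)
  have h := (hasDerivAt_Nf q hq hx0' hx2).div hpow (by positivity)
  refine h.congr_deriv ?_
  unfold G2 Mf Nf Bf
  have h2x : (2:ℝ) - x ≠ 0 := fun h => hx2 (by linarith)
  field_simp
  ring

lemma hasDerivAt_gHS (q : ℕ) (hq : 2 ≤ q) {x : ℝ} (hx : x ∈ Set.Ioo (0:ℝ) 1) :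
    HasDerivAt (gHS q) (G1 q x) x := by
  obtain ⟨hx0, hx1⟩ := hx
  have h1 : (1:ℝ) - x ≠ 0 := by intro h; linarith
  have hx0' : x ≠ 0 := ne_of_gt hx0
  have hx2 : x ≠ 2 := by intro h; linarith
  have h := (hasDerivAt_Ff q hq hx0' hx2).div (one_sub_hasDerivAt x) h1
  have heq : gHS q =ᶠ[nhds x] fun y => Ff q y / (1-y) := by
    filter_upwards [isOpen_Ioo.mem_nhds (show x ∈ Set.Ioo (0:ℝ) 1 from ⟨hx0, hx1⟩)]
      with y hy
    exact gHS_eq q hq hy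
  have h' := h.congr_of_eventuallyEq heq
  refine h'.congr_deriv ?_
  unfold G1 Nf
  field_simp
  ring

theorem stmt8 (q : ℕ) (hq : 2 ≤ q) :
    (∀ x ∈ Set.Ioo (0 : ℝ) 1,
      Real.sign (deriv (gHS q) x) = Real.sign (x - 2 / (q : ℝ))) ∧
    (∀ x ∈ Set.Ioo (0 : ℝ) 1, 0 ≤ deriv (deriv (gHS q)) x) ∧
    ConvexOn ℝ (Set.Ioo (0 : ℝ) 1) (gHS q) := by
  have hq1 : (1:ℝ) < (q:ℝ) := by exact_mod_cast hq.trans_lt' one_lt_two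
  have hq2 : (2:ℝ) ≤ (q:ℝ) := by exact_mod_cast hq
  have hL : 0 < Real.log q := Real.log_pos hq1
  have hq0 : (q:ℝ) ≠ 0 := by positivity
  -- deriv of gHS equals G1 on Ioo 0 1
  have hderiv1 : ∀ x ∈ Set.Ioo (0:ℝ) 1, deriv (gHS q) x = G1 q x :=
    fun x hx => (hasDerivAt_gHS q hq hx).deriv
  -- second derivative
  have hderiv2 : ∀ x ∈ Set.Ioo (0:ℝ) 1, deriv (deriv (gHS q)) x = G2 q x := by
    intro x hx
    have heq : deriv (gHS q) =ᶠ[nhds x] G1 q := by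
      filter_upwards [isOpen_Ioo.mem_nhds hx] with y hy
      exact hderiv1 y hy
    rw [heq.deriv_eq]
    exact (hasDerivAt_G1 q hq hx).deriv
  -- Nf is strictly monotone on Ioc 0 1
  have hNmono : StrictMonoOn (Nf q) (Set.Ioc (0:ℝ) 1) := by
    apply strictMonoOn_of_deriv_pos (convex_Ioc 0 1)
    · intro y hy
      have hy0 : y ≠ 0 := ne_of_gt hy.1
      have hy2 : y ≠ 2 := by intro h; have := hy.2; linarith
      exact (hasDerivAt_Nf q hq hy0 hy2).continuousAt.continuousWithinAt
    · intro y hy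
      rw [interior_Ioc] at hy
      have hy0 : y ≠ 0 := ne_of_gt hy.1
      have hy2 : y ≠ 2 := by intro h; have := hy.2; linarith
      rw [(hasDerivAt_Nf q hq hy0 hy2).deriv]
      have h2y : (0:ℝ) < 2 - y := by linarith [hy.2]
      have hB : 0 < Bf q y := by
        unfold Bf
        have h1 : 0 < 1/y + 1/(2-y) := by
          have := hy.1; positivity
        exact div_pos h1 (by linarith)
      exact mul_pos hB (by linarith [hy.2])
  -- Nf vanishes at 2/q
  have hN0 : Nf q (2/(q:ℝ)) = 0 := by
    have h1 : ((q:ℝ)-1) ≠ 0 := by linarith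
    have e1 : Real.log (2/(q:ℝ)) = Real.log 2 - Real.log q :=
      Real.log_div two_ne_zero hq0
    have e2 : Real.log (2 - 2/(q:ℝ)) = Real.log 2 + Real.log ((q:ℝ)-1) - Real.log q := by
      rw [show (2:ℝ) - 2/(q:ℝ) = 2*((q:ℝ)-1)/(q:ℝ) by field_simp,
        Real.log_div (by positivity) hq0, Real.log_mul two_ne_zero h1]
    unfold Nf Af Ff
    rw [e1, e2]
    field_simp
    ring
  have ht : (2/(q:ℝ)) ∈ Set.Ioc (0:ℝ) 1 := by
    constructor
    · positivity
    · rw [div_le_one (by linarith)]; linarith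
  -- part (ii) core: second derivative nonneg
  have hsecond : ∀ x ∈ Set.Ioo (0:ℝ) 1, 0 ≤ deriv (deriv (gHS q)) x := by
    have hManti : AntitoneOn (Mf q) (Set.Ioc (0:ℝ) 1) := by
      apply antitoneOn_of_deriv_nonpos (convex_Ioc 0 1)
      · intro y hy
        have hy0 : y ≠ 0 := ne_of_gt hy.1
        have hy2 : y ≠ 2 := by intro h; have := hy.2; linarith
        exact (hasDerivAt_Mf q hq hy0 hy2).continuousAt.continuousWithinAt
      · rw [interior_Ioc]
        intro y hy
        have hy0 : y ≠ 0 := ne_of_gt hy.1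
        have hy2 : y ≠ 2 := by intro h; have := hy.2; linarith
        exact (hasDerivAt_Mf q hq hy0 hy2).differentiableAt.differentiableWithinAt
      · rw [interior_Ioc]
        intro y hy
        have hy0 : y ≠ 0 := ne_of_gt hy.1
        have hy2 : y ≠ 2 := by intro h; have := hy.2; linarith
        rw [(hasDerivAt_Mf q hq hy0 hy2).deriv]
        have h2y : (0:ℝ) < 2 - y := by linarith [hy.2]
        have hsq : y^2 ≤ (2-y)^2 := by nlinarith [hy.1, hy.2]
        have h1 : 1/(2-y)^2 ≤ 1/y^2 :=
          one_div_le_one_div_of_le (by have := hy.1; positivity) hsq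
        have h2 : (1/(2-y)^2 - 1/y^2) / (2 * Real.log q) ≤ 0 :=
          div_nonpos_of_nonpos_of_nonneg (by linarith) (by linarith)
        nlinarith [h2, sq_nonneg (1-y)]
    have hM1 : 0 ≤ Mf q 1 := by
      have key : Real.log ((q:ℝ)-1) + 2 * Real.log 2 ≤ 2 * Real.log q := by
        have h1 : ((q:ℝ)-1) * 4 ≤ (q:ℝ)^2 := by nlinarith
        have h2 : Real.log (((q:ℝ)-1) * 4) ≤ Real.log ((q:ℝ)^2) :=
          Real.log_le_log (by nlinarith) h1
        rw [Real.log_mul (by linarith) (by norm_num),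
          show (4:ℝ) = 2^2 by norm_num, Real.log_pow, Real.log_pow] at h2
        push_cast at h2
        linarith
      have hMf1 : Mf q 1 = 2 - (Real.log ((q:ℝ)-1) + 2 * Real.log 2) / Real.log q := by
        unfold Mf Bf Af Ff
        norm_num
        field_simp
        ring
      rw [hMf1, sub_nonneg, div_le_iff₀ hL]
      linarith
    intro x hx
    rw [hderiv2 x hx]
    have hx' : x ∈ Set.Ioc (0:ℝ) 1 := ⟨hx.1, le_of_lt hx.2⟩
    have hMx : 0 ≤ Mf q x :=
      le_trans hM1 (hManti hx' (Set.right_mem_Ioc.mpr one_pos) (le_of_lt hx.2))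
    have hden : (0:ℝ) ≤ (1-x)^3 := by
      have : (0:ℝ) < 1 - x := by linarith [hx.2]
      positivity
    exact div_nonneg hMx hden
  refine ⟨?_, hsecond, ?_⟩
  -- part (i)
  · intro x hx
    have hx' : x ∈ Set.Ioc (0:ℝ) 1 := ⟨hx.1, le_of_lt hx.2⟩
    have hden : (0:ℝ) < (1-x)^2 := by
      have : (0:ℝ) < 1 - x := by linarith [hx.2]
      positivity
    rw [hderiv1 x hx]
    rcases lt_trichotomy x (2/(q:ℝ)) with h | h | h
    · have hNx : Nf q x < 0 := by
        have := hNmono hx' ht h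
        rwa [hN0] at this
      have : G1 q x < 0 := div_neg_of_neg_of_pos hNx hden
      rw [Real.sign_of_neg this, Real.sign_of_neg (by linarith)]
    · have hNx : Nf q x = 0 := by rw [h, hN0]
      have hG : G1 q x = 0 := by unfold G1; rw [hNx]; simp
      rw [hG, show x - 2/(q:ℝ) = 0 by linarith]
    · have hNx : 0 < Nf q x := by
        have := hNmono ht hx' h
        rwa [hN0] at this
      have : 0 < G1 q x := div_pos hNx hden
      rw [Real.sign_of_pos this, Real.sign_of_pos (by linarith)]
  -- convexity
  · apply convexOn_of_deriv2_nonneg' (convex_Ioo 0 1)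
    · intro y hy
      exact (hasDerivAt_gHS q hq hy).differentiableAt.differentiableWithinAt
    · intro y hy
      have heq : deriv (gHS q) =ᶠ[nhds y] G1 q := by
        filter_upwards [isOpen_Ioo.mem_nhds hy] with z hz
        exact hderiv1 z hz
      exact (((hasDerivAt_G1 q hq hy).congr_of_eventuallyEq
        heq).differentiableAt).differentiableWithinAt
    · intro y hy
      have : deriv^[2] (gHS q) y = deriv (deriv (gHS q)) y := by
        simp [Function.iterate_succ, Function.iterate_zero, Function.comp]
      rw [this]
      exact hsecond y hy
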